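/- Let ν₁ and ν₂ be probability distributions on ℕ, and let T₁, T₂ be the total population sizes of BGW processes with one ancestor and offspring distributions ν₁, ν₂ respectively. Then for every k ∈ ℕ*, |P(T₁ ≥ k) - P(T₂ ≥ k)| ≤ d_TV(ν₁,ν₂) · ∑_{i=1}^{k-1} P(T₂ ≥ i). -/

import Mathlib

/-- `j`-fold convolution power of a distribution on ℕ. -/
noncomputable def convPow (ν : ℕ → ℝ) : ℕ → ℕ → ℝ
  | 0, k => if k = 0 then 1 else 0
  | (j + 1), k => ∑ i ∈ Finset.range (k + 1), ν i * convPow ν j (k - i)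

/-- Total variation distance between two distributions on ℕ. -/
noncomputable def dTV (p q : ℕ → ℝ) : ℝ := (1 / 2) * ∑' k : ℕ, |p k - q k|

/-- Law of the total population size of a BGW process with one ancestor and offspring
distribution `ν`:  `P(T = k) = (1/k) P(X₁ + ⋯ + X_k = k - 1)` (Dwass identity / hitting
time of a random walk). -/
noncomputable def progenyPMF (ν : ℕ → ℝ) (k : ℕ) : ℝ :=
  if k = 0 then 0 else (1 / (k : ℝ)) * convPow ν k (k - 1)

/-- `P(T ≥ k)` (including `T = ∞`). -/
noncomputable def progenyTail (ν : ℕ → ℝ) (k : ℕ) : ℝ :=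
  1 - ∑ i ∈ Finset.Ico 1 k, progenyPMF ν i

namespace S3

def Adm (q : ℕ → ℝ) (c : ℕ) : Prop := (∀ i, 0 ≤ q i) ∧ ∑ a ∈ Finset.range (c+1), q a = 1

noncomputable def A (q : ℕ → ℝ) (c : ℕ) : ℕ → ℕ → ℝ
  | 0, _ => 1
  | (m+1), d => ∑ a ∈ Finset.range (c+1), q a * (if 1 ≤ a + d then A q c m (a + d - 1) else 0)

noncomputable def Phi (q : ℕ → ℝ) (c : ℕ) : ℕ → ℕ → ℝ
  | 0, _ => 0
  | (n+1), d => ∑ a ∈ Finset.range (c+1), q a *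
      (if a + d = 0 then (if n = 0 then 1 else 0) else Phi q c n (a + d - 1))

noncomputable def H (p q : ℕ → ℝ) (c : ℕ) : ℕ → ℕ → ℕ → ℝ
  | 0, m, d => A p c m d
  | (_+1), 0, _ => 1
  | (j+1), (m+1), d => ∑ a ∈ Finset.range (c+1), q a *
      (if 1 ≤ a + d then H p q c j m (a + d - 1) else 0)

noncomputable def dTV' (p q : ℕ → ℝ) (c : ℕ) : ℝ :=
  (1/2) * ∑ a ∈ Finset.range (c+1), |p a - q a|

noncomputable def cap (ν : ℕ → ℝ) (c : ℕ) : ℕ → ℝ := fun i =>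
  if i < c then ν i else if i = c then 1 - ∑ j ∈ Finset.range c, ν j else 0

lemma A_nonneg {q c} (hq : Adm q c) : ∀ m d, 0 ≤ A q c m d := by
  intro m
  induction m with
  | zero => intro d; rw [A]; norm_num
  | succ m ih =>
    intro d; rw [A]
    refine Finset.sum_nonneg fun a _ => mul_nonneg (hq.1 a) ?_
    split
    · exact ih _
    · exact le_rfl

lemma A_le_one {q c} (hq : Adm q c) : ∀ m d, A q c m d ≤ 1 := by
  intro m
  induction m with
  | zero => intro d; rw [A]
  | succ m ih =>
    intro d; rw [A]
    calc ∑ a ∈ Finset.range (c+1), q a * (if 1 ≤ a + d then A q c m (a + d - 1) else 0)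
        ≤ ∑ a ∈ Finset.range (c+1), q a := by
          refine Finset.sum_le_sum fun a _ => ?_
          have h1 : q a * (if 1 ≤ a + d then A q c m (a + d - 1) else 0) ≤ q a * 1 := by
            refine mul_le_mul_of_nonneg_left ?_ (hq.1 a)
            split
            · exact ih _
            · norm_num
          simpa using h1
      _ = 1 := hq.2

lemma dTV'_nonneg (p q : ℕ → ℝ) (c : ℕ) : 0 ≤ dTV' p q c := by
  unfold dTV'
  have : (0:ℝ) ≤ ∑ a ∈ Finset.range (c+1), |p a - q a| :=
    Finset.sum_nonneg fun a _ => abs_nonneg _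
  linarith

/-- key TV bound for [0,1]-valued test functions -/
lemma key_bound {p q : ℕ → ℝ} {c : ℕ} (hp : Adm p c) (hq : Adm q c)
    (h : ℕ → ℝ) (h0 : ∀ a, 0 ≤ h a) (h1 : ∀ a, h a ≤ 1) :
    |∑ a ∈ Finset.range (c+1), (p a - q a) * h a| ≤ dTV' p q c := by
  have hsum0 : ∑ a ∈ Finset.range (c+1), (p a - q a) = 0 := by
    rw [Finset.sum_sub_distrib, hp.2, hq.2]; ring
  have key : ∑ a ∈ Finset.range (c+1), (p a - q a) * h a
      = ∑ a ∈ Finset.range (c+1), (p a - q a) * (h a - 1/2) := by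
    rw [← sub_eq_zero]
    rw [← Finset.sum_sub_distrib]
    have : ∀ a ∈ Finset.range (c+1),
        (p a - q a) * h a - (p a - q a) * (h a - 1/2) = (1/2) * (p a - q a) := by
      intro a _; ring
    rw [Finset.sum_congr rfl this, ← Finset.mul_sum, hsum0, mul_zero]
  rw [key]
  calc |∑ a ∈ Finset.range (c+1), (p a - q a) * (h a - 1/2)|
      ≤ ∑ a ∈ Finset.range (c+1), |(p a - q a) * (h a - 1/2)| := Finset.abs_sum_le_sum_abs _ _
    _ ≤ ∑ a ∈ Finset.range (c+1), |p a - q a| * (1/2) := by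
        refine Finset.sum_le_sum fun a _ => ?_
        rw [abs_mul]
        refine mul_le_mul_of_nonneg_left ?_ (abs_nonneg _)
        rw [abs_le]; constructor <;> [linarith [h0 a]; linarith [h1 a]]
    _ = dTV' p q c := by rw [← Finset.sum_mul]; unfold dTV'; ring

lemma A_zero (q : ℕ → ℝ) (c d : ℕ) : A q c 0 d = 1 := by rw [A]
lemma A_succ (q : ℕ → ℝ) (c m d : ℕ) : A q c (m+1) d
    = ∑ a ∈ Finset.range (c+1), q a * (if 1 ≤ a + d then A q c m (a + d - 1) else 0) := by rw [A]
lemma Phi_zero (q : ℕ → ℝ) (c d : ℕ) : Phi q c 0 d = 0 := by rw [Phi]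
lemma Phi_succ (q : ℕ → ℝ) (c n d : ℕ) : Phi q c (n+1) d
    = ∑ a ∈ Finset.range (c+1), q a *
      (if a + d = 0 then (if n = 0 then 1 else 0) else Phi q c n (a + d - 1)) := by rw [Phi]
lemma H_zero (p q : ℕ → ℝ) (c m d : ℕ) : H p q c 0 m d = A p c m d := by rw [H]
lemma H_succ_zero (p q : ℕ → ℝ) (c j d : ℕ) : H p q c (j+1) 0 d = 1 := by rw [H]
lemma H_succ_succ (p q : ℕ → ℝ) (c j m d : ℕ) : H p q c (j+1) (m+1) d
    = ∑ a ∈ Finset.range (c+1), q a *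
      (if 1 ≤ a + d then H p q c j m (a + d - 1) else 0) := by rw [H]

lemma H_eq_A {p q : ℕ → ℝ} {c : ℕ} : ∀ j m d, m ≤ j → H p q c j m d = A q c m d := by
  intro j
  induction j with
  | zero =>
    intro m d hm
    interval_cases m
    rw [H_zero, A_zero, A_zero]
  | succ j ih =>
    intro m d hm
    match m with
    | 0 => rw [H_succ_zero, A_zero]
    | m+1 =>
      rw [H_succ_succ, A_succ]
      refine Finset.sum_congr rfl fun a _ => ?_
      rw [ih m _ (by omega)]

lemma Hdiff {p q : ℕ → ℝ} {c : ℕ} (hp : Adm p c) (hq : Adm q c) :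
    ∀ j m d, |H p q c j m d - H p q c (j+1) m d| ≤ dTV' p q c * A q c j d := by
  intro j
  induction j with
  | zero =>
    intro m d
    match m with
    | 0 =>
      rw [H_zero, H_succ_zero, A_zero, A_zero]
      simpa using dTV'_nonneg p q c
    | m+1 =>
      rw [H_zero, H_succ_succ, A_succ, A_zero, mul_one]
      have hrw : ∑ a ∈ Finset.range (c+1), p a * (if 1 ≤ a + d then A p c m (a+d-1) else 0)
           - ∑ a ∈ Finset.range (c+1), q a * (if 1 ≤ a + d then H p q c 0 m (a+d-1) else 0)
           = ∑ a ∈ Finset.range (c+1),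
              (p a - q a) * (if 1 ≤ a + d then A p c m (a+d-1) else 0) := by
        rw [← Finset.sum_sub_distrib]
        refine Finset.sum_congr rfl fun a _ => ?_
        rw [H_zero]; ring
      rw [hrw]
      refine key_bound hp hq _ (fun a => ?_) (fun a => ?_)
      · split
        · exact A_nonneg hp _ _
        · norm_num
      · split
        · exact A_le_one hp _ _
        · norm_num
  | succ j ih =>
    intro m d
    match m with
    | 0 =>
      rw [H_succ_zero, H_succ_zero]
      simpa using mul_nonneg (dTV'_nonneg p q c) (A_nonneg hq _ _)
    | m+1 =>
      rw [H_succ_succ, H_succ_succ, ← Finset.sum_sub_distrib]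
      have heq : ∀ a ∈ Finset.range (c+1),
          q a * (if 1 ≤ a + d then H p q c j m (a+d-1) else 0)
          - q a * (if 1 ≤ a + d then H p q c (j+1) m (a+d-1) else 0)
          = q a * (if 1 ≤ a + d then H p q c j m (a+d-1) - H p q c (j+1) m (a+d-1) else 0) := by
        intro a _; split <;> ring
      rw [Finset.sum_congr rfl heq]
      calc |∑ a ∈ Finset.range (c+1), q a *
              (if 1 ≤ a + d then H p q c j m (a+d-1) - H p q c (j+1) m (a+d-1) else 0)|
          ≤ ∑ a ∈ Finset.range (c+1), |q a *
              (if 1 ≤ a + d then H p q c j m (a+d-1) - H p q c (j+1) m (a+d-1) else 0)| :=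
            Finset.abs_sum_le_sum_abs _ _
        _ ≤ ∑ a ∈ Finset.range (c+1), q a *
              (if 1 ≤ a + d then dTV' p q c * A q c j (a+d-1) else 0) := by
            refine Finset.sum_le_sum fun a _ => ?_
            rw [abs_mul, abs_of_nonneg (hq.1 a)]
            refine mul_le_mul_of_nonneg_left ?_ (hq.1 a)
            split
            · exact ih m _
            · simp
        _ = dTV' p q c * A q c (j+1) d := by
            rw [A_succ, Finset.mul_sum]
            refine Finset.sum_congr rfl fun a _ => ?_
            split <;> ring

lemma telescope_abs (f : ℕ → ℝ) : ∀ m, |f 0 - f m| ≤ ∑ j ∈ Finset.range m, |f j - f (j+1)| := by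
  intro m
  induction m with
  | zero => simp
  | succ m ih =>
    rw [Finset.sum_range_succ]
    calc |f 0 - f (m+1)| = |(f 0 - f m) + (f m - f (m+1))| := by ring_nf
      _ ≤ |f 0 - f m| + |f m - f (m+1)| := abs_add_le _ _
      _ ≤ _ := by linarith

lemma hybrid_bound {p q : ℕ → ℝ} {c : ℕ} (hp : Adm p c) (hq : Adm q c) (m : ℕ) :
    |A p c m 0 - A q c m 0| ≤ dTV' p q c * ∑ j ∈ Finset.range m, A q c j 0 := by
  rw [← H_zero p q c m 0, ← H_eq_A m m 0 le_rfl]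
  calc |H p q c 0 m 0 - H p q c m m 0|
      ≤ ∑ j ∈ Finset.range m, |H p q c j m 0 - H p q c (j+1) m 0| :=
        telescope_abs (fun j => H p q c j m 0) m
    _ ≤ ∑ j ∈ Finset.range m, dTV' p q c * A q c j 0 :=
        Finset.sum_le_sum fun j _ => Hdiff hp hq j m 0
    _ = _ := by rw [Finset.mul_sum]

lemma sum_shift (f : ℕ → ℝ) (m : ℕ) :
    ∑ n ∈ Finset.Icc 1 m, f n = ∑ n ∈ Finset.range m, f (n+1) := by
  induction m with
  | zero => simp
  | succ m ih =>
    rw [Finset.sum_Icc_succ_top (by omega), Finset.sum_range_succ, ih]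

lemma partition {q : ℕ → ℝ} {c : ℕ} (hq : Adm q c) :
    ∀ m d, A q c m d + ∑ n ∈ Finset.Icc 1 m, Phi q c n d = 1 := by
  intro m
  induction m with
  | zero => intro d; rw [A_zero]; simp
  | succ m ih =>
    intro d
    rw [sum_shift _ (m+1), A_succ]
    have hswap : ∑ n ∈ Finset.range (m+1), Phi q c (n+1) d
        = ∑ a ∈ Finset.range (c+1), ∑ n ∈ Finset.range (m+1), q a *
          (if a + d = 0 then (if n = 0 then 1 else 0) else Phi q c n (a + d - 1)) := by
      rw [Finset.sum_comm]
      refine Finset.sum_congr rfl fun n _ => ?_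
      rw [Phi_succ]
    rw [hswap, ← Finset.sum_add_distrib]
    have hterm : ∀ a ∈ Finset.range (c+1),
        (q a * (if 1 ≤ a + d then A q c m (a + d - 1) else 0)
        + ∑ n ∈ Finset.range (m+1), q a *
          (if a + d = 0 then (if n = 0 then 1 else 0) else Phi q c n (a + d - 1))) = q a := by
      intro a _
      rcases Nat.eq_zero_or_pos (a + d) with h0 | h1
      · rw [if_neg (by omega)]
        have : ∀ n ∈ Finset.range (m+1),
            q a * (if a + d = 0 then (if n = 0 then (1:ℝ) else 0) else Phi q c n (a + d - 1))
            = q a * (if n = 0 then 1 else 0) := by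
          intro n _; rw [if_pos h0]
        rw [Finset.sum_congr rfl this, ← Finset.mul_sum]
        rw [Finset.sum_ite_eq' (Finset.range (m+1)) 0 (fun _ => (1:ℝ))]
        simp
      · rw [if_pos (show 1 ≤ a + d by omega)]
        have : ∀ n ∈ Finset.range (m+1),
            q a * (if a + d = 0 then (if n = 0 then (1:ℝ) else 0) else Phi q c n (a + d - 1))
            = q a * Phi q c n (a + d - 1) := by
          intro n _; rw [if_neg (by omega)]
        rw [Finset.sum_congr rfl this, ← Finset.mul_sum, ← mul_add]
        have hsum : A q c m (a + d - 1) + ∑ n ∈ Finset.range (m+1), Phi q c n (a + d - 1) = 1 := by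
          have h2 : ∑ n ∈ Finset.range (m+1), Phi q c n (a + d - 1)
              = ∑ n ∈ Finset.Icc 1 m, Phi q c n (a + d - 1) := by
            rw [Finset.sum_range_succ' (fun n => Phi q c n (a+d-1)) m, sum_shift, Phi_zero,
              add_zero]
          rw [h2]; exact ih _
        rw [hsum, mul_one]
    rw [Finset.sum_congr rfl hterm, hq.2]

/-- box of tuples with entries ≤ c -/
def box (c n : ℕ) : Finset (Fin n → ℕ) := Fintype.piFinset fun _ => Finset.range (c+1)

lemma mem_box {c n : ℕ} {x : Fin n → ℕ} : x ∈ box c n ↔ ∀ i, x i ≤ c := by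
  simp [box, Fintype.mem_piFinset, Nat.lt_succ_iff]

/-- extension of a tuple by zero -/
def ext {n : ℕ} (x : Fin n → ℕ) (i : ℕ) : ℕ := if h : i < n then x ⟨i, h⟩ else 0

/-- partial sums -/
def ps {n : ℕ} (x : Fin n → ℕ) (j : ℕ) : ℕ := ∑ i ∈ Finset.range j, ext x i

lemma ps_zero {n : ℕ} (x : Fin n → ℕ) : ps x 0 = 0 := rfl

lemma ext_cons_succ {n : ℕ} (a : ℕ) (y : Fin n → ℕ) (i : ℕ) :
    ext (Fin.cons a y) (i+1) = ext y i := by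
  unfold ext
  by_cases h : i < n
  · rw [dif_pos (by omega : i + 1 < n + 1), dif_pos h]
    exact @Fin.cons_succ n (fun _ => ℕ) a y ⟨i, h⟩
  · rw [dif_neg (by omega), dif_neg h]

lemma ext_cons_zero {n : ℕ} (a : ℕ) (y : Fin n → ℕ) : ext (Fin.cons a y) 0 = a := by
  unfold ext; rw [dif_pos (by omega : 0 < n + 1)]
  exact @Fin.cons_zero n (fun _ => ℕ) a y

lemma ps_cons {n : ℕ} (a : ℕ) (y : Fin n → ℕ) (j : ℕ) :
    ps (Fin.cons a y) (j+1) = a + ps y j := by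
  unfold ps
  rw [Finset.sum_range_succ' (fun i => ext (Fin.cons a y) i) j]
  rw [ext_cons_zero]
  have : ∀ i ∈ Finset.range j, ext (Fin.cons a y) (i+1) = ext y i :=
    fun i _ => ext_cons_succ a y i
  rw [Finset.sum_congr rfl this, add_comm]

/-- weight of a tuple -/
noncomputable def w (q : ℕ → ℝ) {n : ℕ} (x : Fin n → ℕ) : ℝ := ∏ i, q (x i)

lemma w_cons (q : ℕ → ℝ) {n : ℕ} (a : ℕ) (y : Fin n → ℕ) :
    w q (Fin.cons a y) = q a * w q y := by
  unfold w; rw [Fin.prod_univ_succ]; simp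

lemma sum_box_zero {c : ℕ} (f : (Fin 0 → ℕ) → ℝ) :
    ∑ x ∈ box c 0, f x = f (fun i => i.elim0) := by
  have h : box c 0 = {fun i => i.elim0} := by
    apply Finset.eq_singleton_iff_unique_mem.mpr
    constructor
    · rw [mem_box]; intro i; exact i.elim0
    · intro x _; funext i; exact i.elim0
  rw [h, Finset.sum_singleton]

lemma sum_box_succ {c n : ℕ} (f : (Fin (n+1) → ℕ) → ℝ) :
    ∑ x ∈ box c (n+1), f x
    = ∑ a ∈ Finset.range (c+1), ∑ y ∈ box c n, f (Fin.cons a y) := by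
  rw [← Finset.sum_product']
  refine (Finset.sum_nbij' (fun p => Fin.cons p.1 p.2) (fun x => (x 0, Fin.tail x))
    ?_ ?_ ?_ ?_ ?_).symm
  · intro p hp
    rw [Finset.mem_product] at hp
    rw [mem_box]
    intro i
    refine Fin.cases ?_ ?_ i
    · simpa using Nat.lt_succ_iff.mp (Finset.mem_range.mp hp.1)
    · intro j; simpa using (mem_box.mp hp.2) j
  · intro x hx
    rw [mem_box] at hx
    rw [Finset.mem_product]
    exact ⟨Finset.mem_range.mpr (Nat.lt_succ_iff.mpr (hx 0)),
      mem_box.mpr fun j => hx j.succ⟩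
  · intro p _; simp [Fin.tail_cons]
  · intro x _; exact Fin.cons_self_tail x
  · intro p _; rfl

/-- first hit of deficit at time exactly n, starting with surplus d -/
def FHD (d n : ℕ) {m : ℕ} (x : Fin m → ℕ) : Prop :=
  (∀ j, j < n → j ≤ ps x j + d) ∧ ps x n + d + 1 = n

instance (d n m : ℕ) (x : Fin m → ℕ) : Decidable (FHD d n x) := by
  unfold FHD
  exact instDecidableAnd


lemma fhd_cons {d n : ℕ} {a : ℕ} {y : Fin n → ℕ} :
    FHD d (n+1) (Fin.cons a y) ↔
      (if a + d = 0 then n = 0 else FHD (a + d - 1) n y) := by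
  unfold FHD
  constructor
  · rintro ⟨h1, h2⟩
    by_cases h0 : a + d = 0
    · rw [if_pos h0]
      by_contra hn
      have hn1 : 1 ≤ n := by omega
      have := h1 1 (by omega)
      rw [ps_cons, ps_zero] at this
      omega
    · rw [if_neg h0]
      constructor
      · intro j hj
        have := h1 (j+1) (by omega)
        rw [ps_cons] at this
        omega
      · rw [ps_cons] at h2; omega
  · intro h
    by_cases h0 : a + d = 0
    · rw [if_pos h0] at h
      subst h
      refine ⟨fun j hj => by omega, ?_⟩
      rw [ps_cons, ps_zero]; omega
    · rw [if_neg h0] at h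
      obtain ⟨h1, h2⟩ := h
      constructor
      · intro j hj
        match j with
        | 0 => omega
        | j+1 =>
          have := h1 j (by omega)
          rw [ps_cons]
          omega
      · rw [ps_cons]; omega

/-- bridge between the recursion `Phi` and tuple sums -/
lemma Phi_eq_sum {q : ℕ → ℝ} {c : ℕ} :
    ∀ n d, Phi q c n d = ∑ x ∈ box c n, (if FHD d n x then 1 else 0) * w q x := by
  intro n
  induction n with
  | zero =>
    intro d
    rw [Phi, sum_box_zero]
    have : ¬ FHD d 0 (fun i : Fin 0 => i.elim0) := by
      unfold FHD
      rintro ⟨-, h2⟩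
      rw [ps_zero] at h2
      omega
    rw [if_neg this, zero_mul]
  | succ n ih =>
    intro d
    rw [Phi_succ, sum_box_succ]
    refine Finset.sum_congr rfl fun a _ => ?_
    have hcons : ∀ y ∈ box c n,
        (if FHD d (n+1) (Fin.cons a y) then (1:ℝ) else 0) * w q (Fin.cons a y)
        = q a * ((if (if a + d = 0 then n = 0 else FHD (a+d-1) n y) then 1 else 0) * w q y) := by
      intro y _
      rw [w_cons]
      rw [if_congr (fhd_cons (d := d) (n := n) (a := a) (y := y)) rfl rfl]
      ring
    rw [Finset.sum_congr rfl hcons, ← Finset.mul_sum]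
    congr 1
    by_cases h0 : a + d = 0
    · rw [if_pos h0]
      by_cases hn : n = 0
      · subst hn
        rw [if_pos rfl, sum_box_zero]
        simp [h0, w]
      · rw [if_neg hn]
        symm
        refine Finset.sum_eq_zero fun y _ => ?_
        simp [h0, hn]
    · rw [if_neg h0, ih]
      refine Finset.sum_congr rfl fun y _ => ?_
      congr 1
      simp only [h0, ↓reduceIte]




lemma convPow_zero (ν : ℕ → ℝ) (k : ℕ) : convPow ν 0 k = if k = 0 then 1 else 0 := by
  rw [convPow]
lemma convPow_succ (ν : ℕ → ℝ) (j k : ℕ) :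
    convPow ν (j+1) k = ∑ i ∈ Finset.range (k + 1), ν i * convPow ν j (k - i) := by
  rw [convPow]

/-- bridge between convolution powers and tuple sums -/
lemma convPow_eq_sum {ν : ℕ → ℝ} {c : ℕ} :
    ∀ n s, s ≤ c → convPow ν n s
      = ∑ x ∈ box c n, (if ps x n = s then 1 else 0) * w ν x := by
  intro n
  induction n with
  | zero =>
    intro s _
    rw [convPow_zero, sum_box_zero, ps_zero]
    unfold w
    by_cases h : s = 0 <;> simp [h, eq_comm]
  | succ n ih =>
    intro s hs
    rw [convPow_succ, sum_box_succ]
    have hterm : ∀ a ∈ Finset.range (c+1),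
        ∑ y ∈ box c n, (if ps (Fin.cons a y) (n+1) = s then (1:ℝ) else 0) * w ν (Fin.cons a y)
        = if a ≤ s then ν a * convPow ν n (s - a) else 0 := by
      intro a _
      by_cases ha : a ≤ s
      · rw [if_pos ha, ih (s - a) (by omega), Finset.mul_sum]
        refine Finset.sum_congr rfl fun y _ => ?_
        rw [w_cons, ps_cons]
        have : (a + ps y n = s) ↔ (ps y n = s - a) := by omega
        rw [if_congr this rfl rfl]
        ring
      · rw [if_neg ha]
        refine Finset.sum_eq_zero fun y _ => ?_
        rw [ps_cons, if_neg (by omega), zero_mul]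
    rw [Finset.sum_congr rfl hterm]
    rw [← Finset.sum_subset (Finset.range_subset_range.mpr (show s + 1 ≤ c + 1 by omega))
        (fun a _ ha => if_neg (fun hle => ha (Finset.mem_range.mpr (by omega))))]
    refine Finset.sum_congr rfl fun a ha => ?_
    rw [if_pos (Nat.lt_succ_iff.mp (Finset.mem_range.mp ha))]

/-- total sum equals `ps x n` -/
lemma ps_top {n : ℕ} (x : Fin n → ℕ) : ps x n = ∑ i, x i := by
  unfold ps
  rw [← Fin.sum_univ_eq_sum_range (fun i => ext x i) n]
  refine Finset.sum_congr rfl fun i _ => ?_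
  unfold ext
  rw [dif_pos i.isLt]



/-! ### The cycle lemma -/

/-- periodic extension -/
def xx {n' : ℕ} (x : Fin (n'+1) → ℕ) (i : ℕ) : ℕ :=
  x ⟨i % (n'+1), Nat.mod_lt _ (Nat.succ_pos n')⟩

/-- partial sums of the periodic extension -/
def sf {n' : ℕ} (x : Fin (n'+1) → ℕ) (j : ℕ) : ℕ := ∑ i ∈ Finset.range j, xx x i

/-- centered walk -/
def mZ {n' : ℕ} (x : Fin (n'+1) → ℕ) (j : ℕ) : ℤ := (sf x j : ℤ) - j

open Fin.NatCast in
/-- rotation of `Fin (n'+1)` by `r` -/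
def rot (n' r : ℕ) : Fin (n'+1) ≃ Fin (n'+1) := Equiv.addRight (r : Fin (n'+1))

open Fin.NatCast in
lemma rot_apply {n' : ℕ} {r : ℕ} (hr : r < n'+1) (j : ℕ) (hj : j < n'+1) :
    rot n' r ⟨j, hj⟩ = ⟨(r + j) % (n'+1), Nat.mod_lt _ (Nat.succ_pos n')⟩ := by
  apply Fin.ext
  show ((⟨j, hj⟩ : Fin (n'+1)) + (r : Fin (n'+1))).val = (r + j) % (n'+1)
  rw [Fin.add_def]
  simp only [Fin.val_natCast]
  rw [Nat.mod_eq_of_lt hr, Nat.add_comm j r]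

section Cycle

variable {n' : ℕ} (x : Fin (n'+1) → ℕ)

lemma sf_succ (j : ℕ) : sf x (j+1) = sf x j + xx x j := Finset.sum_range_succ _ _

lemma sf_top (hsum : ps x (n'+1) + 1 = n'+1) : sf x (n'+1) = n' := by
  have h : sf x (n'+1) = ps x (n'+1) := by
    refine Finset.sum_congr rfl fun i hi => ?_
    rw [Finset.mem_range] at hi
    unfold xx ext
    rw [dif_pos hi]
    congr 1
    exact Fin.ext (Nat.mod_eq_of_lt hi)
  omega

lemma xx_per (j : ℕ) : xx x (j + (n'+1)) = xx x j := by
  unfold xx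
  congr 1
  exact Fin.ext (Nat.add_mod_right j (n'+1))

lemma sf_add (hsum : ps x (n'+1) + 1 = n'+1) : ∀ j, sf x (j + (n'+1)) = sf x j + n' := by
  intro j
  induction j with
  | zero => simpa [sf] using sf_top x hsum
  | succ j ih =>
    have h1 : j + 1 + (n'+1) = (j + (n'+1)) + 1 := by omega
    rw [h1, sf_succ, ih, xx_per, sf_succ]
    omega

lemma mZ_add (hsum : ps x (n'+1) + 1 = n'+1) (j : ℕ) :
    mZ x (j + (n'+1)) = mZ x j - 1 := by
  unfold mZ
  rw [sf_add x hsum j]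
  push_cast
  ring

lemma ps_rot {r : ℕ} (hr : r < n'+1) :
    ∀ j, j ≤ n'+1 → sf x r + ps (x ∘ rot n' r) j = sf x (r + j) := by
  intro j
  induction j with
  | zero => simp [ps_zero]
  | succ j ih =>
    intro hj
    have hjlt : j < n'+1 := by omega
    have hext : ext (x ∘ rot n' r) j = xx x (r + j) := by
      unfold ext
      rw [dif_pos hjlt]
      show x (rot n' r ⟨j, hjlt⟩) = xx x (r + j)
      rw [rot_apply hr j hjlt]
      rfl
    have hps : ps (x ∘ rot n' r) (j+1) = ps (x ∘ rot n' r) j + ext (x ∘ rot n' r) j :=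
      Finset.sum_range_succ _ _
    rw [hps, hext]
    have h2 : r + (j + 1) = (r + j) + 1 := by omega
    rw [h2, sf_succ]
    have := ih (by omega)
    omega

/-- characterization of rotated first-hit in terms of the walk `mZ` -/
lemma fhd_rot_iff (hsum : ps x (n'+1) + 1 = n'+1) {r : ℕ} (hr : r < n'+1) :
    FHD 0 (n'+1) (x ∘ rot n' r) ↔
      (∀ j, 1 ≤ j → j < n'+1 → mZ x r ≤ mZ x (r + j)) := by
  have hps := ps_rot x hr
  have hmz : ∀ j, j ≤ n'+1 → (ps (x ∘ rot n' r) j : ℤ) - j = mZ x (r + j) - mZ x r := by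
    intro j hj
    have := hps j hj
    unfold mZ
    push_cast [← this]
    ring
  constructor
  · rintro ⟨h1, -⟩
    intro j h1j hjlt
    have hle := h1 j (by omega)
    have := hmz j (by omega)
    omega
  · intro hV
    constructor
    · intro j hj
      rcases Nat.eq_zero_or_pos j with h0 | h1
      · omega
      · have := hV j (by omega) hj
        have := hmz j (by omega)
        omega
    · have hN := hmz (n'+1) le_rfl
      have h3 : mZ x (r + (n'+1)) = mZ x r - 1 := mZ_add x hsum r
      omega

lemma exists_unique_rot (hsum : ps x (n'+1) + 1 = n'+1) :
    ∃! r, r < n'+1 ∧ FHD 0 (n'+1) (x ∘ rot n' r) := by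
  have hex : ∃ j, j < n'+1 ∧ ∀ j', j' < n'+1 → mZ x j ≤ mZ x j' := by
    obtain ⟨b, hb, hbmin⟩ := Finset.exists_min_image (Finset.range (n'+1)) (mZ x)
      (Finset.nonempty_range_iff.mpr (by omega))
    exact ⟨b, Finset.mem_range.mp hb,
      fun j' hj' => hbmin j' (Finset.mem_range.mpr hj')⟩
  obtain ⟨hr0N, hmin⟩ := Nat.find_spec hex
  set r0 := Nat.find hex with hr0def
  have hfirst : ∀ j, j < r0 → mZ x r0 + 1 ≤ mZ x j := by
    intro j hj
    have h1 := Nat.find_min hex hj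
    have h2 := hmin j (by omega)
    by_contra hc
    have heq : mZ x j = mZ x r0 := by omega
    exact h1 ⟨by omega, fun j' hj' => heq ▸ hmin j' hj'⟩
  -- the V property
  have hViff : ∀ r, r < n'+1 → (FHD 0 (n'+1) (x ∘ rot n' r) ↔
      (∀ j, 1 ≤ j → j < n'+1 → mZ x r ≤ mZ x (r + j))) :=
    fun r hr => fhd_rot_iff x hsum hr
  have hVr0 : ∀ j, 1 ≤ j → j < n'+1 → mZ x r0 ≤ mZ x (r0 + j) := by
    intro j h1 hj
    by_cases hc : r0 + j < n'+1
    · exact hmin _ hc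
    · have h2 : r0 + j = (r0 + j - (n'+1)) + (n'+1) := by omega
      rw [h2, mZ_add x hsum]
      have h3 : r0 + j - (n'+1) < r0 := by omega
      have := hfirst _ h3
      omega
  -- uniqueness core
  have hkey : ∀ a b, a < b → b < n'+1 →
      (∀ j, 1 ≤ j → j < n'+1 → mZ x a ≤ mZ x (a + j)) →
      (∀ j, 1 ≤ j → j < n'+1 → mZ x b ≤ mZ x (b + j)) → False := by
    intro a b hab hbN hVa hVb
    have h1 : mZ x a ≤ mZ x b := by
      have := hVa (b - a) (by omega) (by omega)
      rwa [show a + (b - a) = b by omega] at this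
    have h2 : mZ x b ≤ mZ x (a + (n'+1)) := by
      have := hVb (a + (n'+1) - b) (by omega) (by omega)
      rwa [show b + (a + (n'+1) - b) = a + (n'+1) by omega] at this
    rw [mZ_add x hsum] at h2
    omega
  refine ⟨r0, ⟨hr0N, (hViff r0 hr0N).mpr hVr0⟩, ?_⟩
  rintro r ⟨hrN, hr⟩
  rw [hViff r hrN] at hr
  rcases lt_trichotomy r r0 with h | h | h
  · exact absurd (hkey r r0 h hr0N hr hVr0) (fun h => h)
  · exact h
  · exact absurd (hkey r0 r h hrN hVr0 hr) (fun h => h)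

lemma count_rot (hsum : ps x (n'+1) + 1 = n'+1) :
    ∑ r ∈ Finset.range (n'+1), (if FHD 0 (n'+1) (x ∘ rot n' r) then (1:ℝ) else 0) = 1 := by
  obtain ⟨r0, ⟨hr0N, hr0⟩, huniq⟩ := exists_unique_rot x hsum
  have hcongr : ∀ r ∈ Finset.range (n'+1),
      (if FHD 0 (n'+1) (x ∘ rot n' r) then (1:ℝ) else 0) = if r = r0 then 1 else 0 := by
    intro r hr
    rw [Finset.mem_range] at hr
    by_cases h : FHD 0 (n'+1) (x ∘ rot n' r)
    · rw [if_pos h, if_pos (huniq r ⟨hr, h⟩)]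
    · rw [if_neg h, if_neg (fun he => h (by rw [he]; exact hr0))]
  rw [Finset.sum_congr rfl hcongr, Finset.sum_ite_eq' (Finset.range (n'+1)) r0 (fun _ => (1:ℝ)),
    if_pos (Finset.mem_range.mpr hr0N)]

end Cycle

/-- sums over the box are invariant under coordinate permutations -/
lemma sum_box_comp {c n : ℕ} (σ : Fin n ≃ Fin n) (F : (Fin n → ℕ) → ℝ) :
    ∑ x ∈ box c n, F (x ∘ σ) = ∑ x ∈ box c n, F x := by
  refine Finset.sum_nbij' (fun x => x ∘ σ) (fun x => x ∘ σ.symm) ?_ ?_ ?_ ?_ ?_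
  · intro a ha; rw [mem_box] at ha ⊢; intro i; exact ha _
  · intro a ha; rw [mem_box] at ha ⊢; intro i; exact ha _
  · intro a _; funext i; simp
  · intro a _; funext i; simp
  · intro a _; rfl

lemma w_comp (q : ℕ → ℝ) {n : ℕ} (σ : Fin n ≃ Fin n) (x : Fin n → ℕ) :
    w q (x ∘ σ) = w q x := by
  unfold w
  exact Equiv.prod_comp σ (fun i => q (x i))

lemma ps_top_comp {n : ℕ} (σ : Fin n ≃ Fin n) (x : Fin n → ℕ) :
    ps (x ∘ σ) n = ps x n := by
  rw [ps_top, ps_top]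
  exact Equiv.sum_comp σ x

/-- THE CYCLE LEMMA -/
lemma cycle_lemma (q : ℕ → ℝ) {c n' : ℕ} :
    ((n':ℝ)+1) * ∑ x ∈ box c (n'+1), (if FHD 0 (n'+1) x then 1 else 0) * w q x
    = ∑ x ∈ box c (n'+1), (if ps x (n'+1) + 1 = n'+1 then 1 else 0) * w q x := by
  have hstep : ∀ x ∈ box c (n'+1),
      (if ps x (n'+1) + 1 = n'+1 then (1:ℝ) else 0) * w q x
      = ∑ r ∈ Finset.range (n'+1),
          (if FHD 0 (n'+1) (x ∘ rot n' r) then (1:ℝ) else 0) * w q x := by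
    intro x _
    by_cases h : ps x (n'+1) + 1 = n'+1
    · rw [if_pos h, ← Finset.sum_mul, count_rot x h]
    · rw [if_neg h, zero_mul]
      symm
      apply Finset.sum_eq_zero
      intro r hr
      have hfh : ¬ FHD 0 (n'+1) (x ∘ rot n' r) := by
        intro hfh
        apply h
        have h2 := hfh.2
        rw [ps_top_comp (rot n' r) x] at h2
        omega
      rw [if_neg hfh, zero_mul]
  have hfix : ∀ r ∈ Finset.range (n'+1),
      ∑ x ∈ box c (n'+1), (if FHD 0 (n'+1) (x ∘ rot n' r) then (1:ℝ) else 0) * w q x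
      = ∑ x ∈ box c (n'+1), (if FHD 0 (n'+1) x then (1:ℝ) else 0) * w q x := by
    intro r _
    have h1 : ∀ x ∈ box c (n'+1),
        (if FHD 0 (n'+1) (x ∘ rot n' r) then (1:ℝ) else 0) * w q x
        = (if FHD 0 (n'+1) (x ∘ rot n' r) then (1:ℝ) else 0) * w q (x ∘ rot n' r) := by
      intro x _
      rw [w_comp]
    rw [Finset.sum_congr rfl h1]
    exact sum_box_comp (rot n' r) (fun y => (if FHD 0 (n'+1) y then (1:ℝ) else 0) * w q y)
  calc ((n':ℝ)+1) * ∑ x ∈ box c (n'+1), (if FHD 0 (n'+1) x then 1 else 0) * w q x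
      = ∑ _r ∈ Finset.range (n'+1),
          ∑ x ∈ box c (n'+1), (if FHD 0 (n'+1) x then (1:ℝ) else 0) * w q x := by
        rw [Finset.sum_const, Finset.card_range, nsmul_eq_mul]
        push_cast
        ring
    _ = ∑ r ∈ Finset.range (n'+1), ∑ x ∈ box c (n'+1),
          (if FHD 0 (n'+1) (x ∘ rot n' r) then (1:ℝ) else 0) * w q x :=
        (Finset.sum_congr rfl hfix).symm
    _ = ∑ x ∈ box c (n'+1), ∑ r ∈ Finset.range (n'+1),
          (if FHD 0 (n'+1) (x ∘ rot n' r) then (1:ℝ) else 0) * w q x := Finset.sum_comm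
    _ = ∑ x ∈ box c (n'+1), (if ps x (n'+1) + 1 = n'+1 then 1 else 0) * w q x :=
        (Finset.sum_congr rfl hstep).symm




lemma entry_le {n : ℕ} (x : Fin n → ℕ) (i : Fin n) : x i ≤ ps x n := by
  rw [ps_top]
  exact Finset.single_le_sum (fun j _ => Nat.zero_le _) (Finset.mem_univ i)

/-- `Phi` with the capped measure computes the progeny pmf -/
lemma Phi_cap_eq_pmf {ν : ℕ → ℝ} {c n : ℕ} (hn : 1 ≤ n) (hnc : n ≤ c) :
    Phi (cap ν c) c n 0 = progenyPMF ν n := by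
  obtain ⟨n', rfl⟩ : ∃ n'', n = n'' + 1 := ⟨n - 1, by omega⟩
  have hcyc := cycle_lemma (cap ν c) (c := c) (n' := n')
  rw [Phi_eq_sum]
  have hsum2 : ∑ x ∈ box c (n'+1), (if ps x (n'+1) + 1 = n'+1 then (1:ℝ) else 0)
        * w (cap ν c) x
      = convPow ν (n'+1) n' := by
    rw [convPow_eq_sum (c := c) (n'+1) n' (by omega)]
    refine Finset.sum_congr rfl fun x _ => ?_
    by_cases h : ps x (n'+1) + 1 = n'+1
    · rw [if_pos h, if_pos (by omega)]
      congr 1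
      unfold w
      refine Finset.prod_congr rfl fun i _ => ?_
      have hxi : x i < c := by
        have := entry_le x i
        omega
      unfold cap
      rw [if_pos hxi]
    · rw [if_neg h, if_neg (by omega), zero_mul, zero_mul]
  rw [hsum2] at hcyc
  unfold progenyPMF
  rw [if_neg (by omega)]
  have hne : ((n':ℝ)+1) ≠ 0 := by positivity
  have : ((n'+1 : ℕ) : ℝ) = (n':ℝ)+1 := by push_cast; ring
  rw [this]
  have hgoal : convPow ν (n'+1) (n'+1-1) = convPow ν (n'+1) n' := by norm_num
  rw [hgoal, ← hcyc]
  field_simp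

lemma summable_of_tsum_one {ν : ℕ → ℝ} (h : ∑' k, ν k = 1) : Summable ν := by
  by_contra hs
  rw [tsum_eq_zero_of_not_summable hs] at h
  norm_num at h

lemma adm_cap {ν : ℕ → ℝ} (hnn : ∀ k, 0 ≤ ν k) (hsum : ∑' k, ν k = 1) (c : ℕ) :
    Adm (cap ν c) c := by
  have hsummable := summable_of_tsum_one hsum
  constructor
  · intro i
    unfold cap
    split
    · exact hnn i
    · split
      · have hle : ∑ j ∈ Finset.range c, ν j ≤ ∑' k, ν k :=
          Summable.sum_le_tsum _ (fun i _ => hnn i) hsummable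
        rw [hsum] at hle
        linarith
      · exact le_rfl
  · rw [Finset.sum_range_succ]
    have h1 : ∀ j ∈ Finset.range c, cap ν c j = ν j := by
      intro j hj
      unfold cap
      rw [if_pos (Finset.mem_range.mp hj)]
    rw [Finset.sum_congr rfl h1]
    unfold cap
    rw [if_neg (by omega), if_pos rfl]
    ring


lemma dTV'_cap_le {ν1 ν2 : ℕ → ℝ} (h1s : ∑' k, ν1 k = 1) (h2s : ∑' k, ν2 k = 1) (c : ℕ) :
    dTV' (cap ν1 c) (cap ν2 c) c ≤ dTV ν1 ν2 := by
  have hS1 := summable_of_tsum_one h1s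
  have hS2 := summable_of_tsum_one h2s
  have hf : Summable (fun k => ν1 k - ν2 k) := hS1.sub hS2
  have habs : Summable (fun k => |ν1 k - ν2 k|) := hf.abs
  have htsum0 : ∑' k, (ν1 k - ν2 k) = 0 := by
    rw [hS1.tsum_sub hS2, h1s, h2s]; ring
  have hcompl := hf.sum_add_tsum_compl (s := Finset.range c)
  rw [htsum0] at hcompl
  have habscompl := habs.sum_add_tsum_compl (s := Finset.range c)
  set K : Set ℕ := ↑(Finset.range c) with hK
  -- pointwise description of the capped differences
  unfold dTV' dTV
  rw [Finset.sum_range_succ]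
  have hsmall : ∀ j ∈ Finset.range c, |cap ν1 c j - cap ν2 c j| = |ν1 j - ν2 j| := by
    intro j hj
    unfold cap
    rw [if_pos (Finset.mem_range.mp hj), if_pos (Finset.mem_range.mp hj)]
  rw [Finset.sum_congr rfl hsmall]
  have hlast : |cap ν1 c c - cap ν2 c c| = |∑ j ∈ Finset.range c, (ν1 j - ν2 j)| := by
    unfold cap
    rw [if_neg (by omega), if_pos rfl, if_neg (by omega), if_pos rfl]
    rw [Finset.sum_sub_distrib]
    rw [abs_sub_comm]
    congr 1
    ring
  rw [hlast]
  have hbound : |∑ j ∈ Finset.range c, (ν1 j - ν2 j)|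
      ≤ ∑' (k : ↥(Kᶜ)), |ν1 (k:ℕ) - ν2 (k:ℕ)| := by
    have heq : ∑ j ∈ Finset.range c, (ν1 j - ν2 j)
        = - ∑' (k : ↥(Kᶜ)), (ν1 (k:ℕ) - ν2 (k:ℕ)) := by
      linarith [hcompl]
    rw [heq, abs_neg]
    simpa using norm_tsum_le_tsum_norm
      (f := fun k : ↥(Kᶜ) => ν1 (k:ℕ) - ν2 (k:ℕ)) (habs.subtype _)
  have hfin : ∑ j ∈ Finset.range c, |ν1 j - ν2 j|
        + ∑' (k : ↥(Kᶜ)), |ν1 (k:ℕ) - ν2 (k:ℕ)|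
      = ∑' k, |ν1 k - ν2 k| := habscompl
  linarith


lemma tail_eq {ν : ℕ → ℝ} (hnn : ∀ k, 0 ≤ ν k) (hsum : ∑' k, ν k = 1) {c i : ℕ}
    (h1 : 1 ≤ i) (hic : i ≤ c + 1) :
    progenyTail ν i = A (cap ν c) c (i-1) 0 := by
  have hq := adm_cap hnn hsum c
  have hpart := partition hq (i-1) 0
  unfold progenyTail
  have hIco : Finset.Ico 1 i = Finset.Icc 1 (i-1) := by
    ext a
    simp only [Finset.mem_Ico, Finset.mem_Icc]
    omega
  rw [hIco]
  have hPhi : ∀ n ∈ Finset.Icc 1 (i-1), progenyPMF ν n = Phi (cap ν c) c n 0 := by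
    intro n hn
    rw [Finset.mem_Icc] at hn
    exact (Phi_cap_eq_pmf hn.1 (by omega)).symm
  rw [Finset.sum_congr rfl hPhi]
  linarith [hpart]

end S3

/-- comparison of the total population sizes of two BGW processes. -/
theorem stmt3 (ν1 ν2 : ℕ → ℝ)
    (h1nn : ∀ k, 0 ≤ ν1 k) (h1sum : ∑' k : ℕ, ν1 k = 1)
    (h2nn : ∀ k, 0 ≤ ν2 k) (h2sum : ∑' k : ℕ, ν2 k = 1) :
    ∀ k : ℕ, 1 ≤ k →
      |progenyTail ν1 k - progenyTail ν2 k| ≤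
        dTV ν1 ν2 * ∑ i ∈ Finset.Icc 1 (k - 1), progenyTail ν2 i := by
  intro k hk
  have hp := S3.adm_cap h1nn h1sum (k-1)
  have hq := S3.adm_cap h2nn h2sum (k-1)
  have ht1 : progenyTail ν1 k = S3.A (S3.cap ν1 (k-1)) (k-1) (k-1) 0 :=
    S3.tail_eq h1nn h1sum hk (by omega)
  have ht2 : progenyTail ν2 k = S3.A (S3.cap ν2 (k-1)) (k-1) (k-1) 0 :=
    S3.tail_eq h2nn h2sum hk (by omega)
  have hRHS : ∑ i ∈ Finset.Icc 1 (k-1), progenyTail ν2 i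
      = ∑ j ∈ Finset.range (k-1), S3.A (S3.cap ν2 (k-1)) (k-1) j 0 := by
    rw [S3.sum_shift]
    refine Finset.sum_congr rfl fun j hj => ?_
    rw [Finset.mem_range] at hj
    have h := S3.tail_eq h2nn h2sum (show 1 ≤ j+1 by omega) (show j+1 ≤ (k-1)+1 by omega)
    simpa using h
  rw [ht1, ht2, hRHS]
  have hhyb := S3.hybrid_bound hp hq (k-1)
  have hdtv := S3.dTV'_cap_le h1sum h2sum (k-1)
  have hsumnn : 0 ≤ ∑ j ∈ Finset.range (k-1), S3.A (S3.cap ν2 (k-1)) (k-1) j 0 :=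
    Finset.sum_nonneg fun j _ => S3.A_nonneg hq j 0
  calc |S3.A (S3.cap ν1 (k-1)) (k-1) (k-1) 0 - S3.A (S3.cap ν2 (k-1)) (k-1) (k-1) 0|
      ≤ S3.dTV' (S3.cap ν1 (k-1)) (S3.cap ν2 (k-1)) (k-1)
        * ∑ j ∈ Finset.range (k-1), S3.A (S3.cap ν2 (k-1)) (k-1) j 0 := hhyb
    _ ≤ dTV ν1 ν2 * ∑ j ∈ Finset.range (k-1), S3.A (S3.cap ν2 (k-1)) (k-1) j 0 :=
        mul_le_mul_of_nonneg_right hdtv hsumnn
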